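/- arXiv:2404.09741 — 3 statements merged into one kernel-verified Lean document; each statement's English description precedes it below -/
import Mathlib

section
/- Let Ω be a finite set with k := |Ω| > 1 and let p = (p_1, p_2, …) be any sequence of probability measures on Ω. Then IT(p)-almost surely, the set of cluster points of the relative-frequency vectors coincides with the set of cluster points of the Cesàro averages of the measures: IT(p)({ω ∈ Ω^ℕ : CP(n ↦ r_n(ω)) = CP(n ↦ (1/n)∑_{i=1}^n p_i)}) = 1. -/
open MeasureTheory Filter Topology

noncomputable section

/-- The set of probability vectors over a finite set `Ω`, i.e. the standard simplex
inside the Euclidean space `ℝ^Ω`. -/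
def probVec (Ω : Type*) [Fintype Ω] : Set (EuclideanSpace ℝ Ω) :=
  {p | (∀ x, 0 ≤ p x) ∧ ∑ x, p x = 1}

/-- The relative-frequency vector of the first `n` terms of `ω`. -/
def relFreq {Ω : Type*} [Fintype Ω] [DecidableEq Ω] (ω : ℕ → Ω) (n : ℕ) :
    EuclideanSpace ℝ Ω :=
  WithLp.toLp 2 fun x => (((Finset.range n).filter fun i => ω i = x).card : ℝ) / n

/-- The set of cluster points of a sequence. -/
def clusterPts {X : Type*} [TopologicalSpace X] (a : ℕ → X) : Set X :=
  {c | MapClusterPt c atTop a}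

/-- Cesàro averages of a sequence of vectors. -/
def cesaro {Ω : Type*} [Fintype Ω] (m : ℕ → EuclideanSpace ℝ Ω) (n : ℕ) :
    EuclideanSpace ℝ Ω :=
  (n : ℝ)⁻¹ • ∑ i ∈ Finset.range n, m i

/-- `μ` is the infinite (Ionescu-Tulcea) independent product of the probability vectors `m i`,
characterized by its values on cylinder sets. -/
def IsIT {Ω : Type*} [Fintype Ω] [MeasurableSpace Ω] (m : ℕ → EuclideanSpace ℝ Ω)
    (μ : Measure (ℕ → Ω)) : Prop :=
  ∀ (n : ℕ) (x : Fin n → Ω),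
    μ {ω | ∀ i : Fin n, ω (i : ℕ) = x i} = ∏ i : Fin n, ENNReal.ofReal (m i.val (x i))

end

set_option linter.unusedSectionVars false
set_option linter.unusedVariables false

section aux

variable {Ω : Type*} [Fintype Ω] [DecidableEq Ω] [MeasurableSpace Ω]
    [MeasurableSingletonClass Ω]
variable {p : ℕ → EuclideanSpace ℝ Ω} {μ : Measure (ℕ → Ω)}

lemma cyl_measurable (n : ℕ) (g : Fin n → Ω) :
    MeasurableSet {ω : ℕ → Ω | ∀ i : Fin n, ω (i : ℕ) = g i} := by
  have h : {ω : ℕ → Ω | ∀ i : Fin n, ω (i : ℕ) = g i}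
      = ⋂ i : Fin n, (fun ω : ℕ → Ω => ω (i : ℕ)) ⁻¹' {g i} := by
    ext ω; simp [Set.mem_iInter]
  rw [h]
  exact MeasurableSet.iInter fun i =>
    (measurable_pi_apply _) (measurableSet_singleton _)

lemma key (hμ : IsIT p μ) (n : ℕ) (A : Fin n → Finset Ω) :
    μ {ω | ∀ i : Fin n, ω (i : ℕ) ∈ A i} =
      ∏ i : Fin n, ∑ a ∈ A i, ENNReal.ofReal (p (i : ℕ) a) := by
  have hset : {ω : ℕ → Ω | ∀ i : Fin n, ω (i : ℕ) ∈ A i} =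
      ⋃ g ∈ Fintype.piFinset A, {ω : ℕ → Ω | ∀ i : Fin n, ω (i : ℕ) = g i} := by
    ext ω
    simp only [Set.mem_setOf_eq, Set.mem_iUnion, Fintype.mem_piFinset, exists_prop]
    constructor
    · intro h; exact ⟨fun i => ω (i : ℕ), h, fun i => rfl⟩
    · rintro ⟨g, hg, he⟩ i; rw [he i]; exact hg i
  have hdisj : (↑(Fintype.piFinset A) : Set (Fin n → Ω)).PairwiseDisjoint
      (fun g => {ω : ℕ → Ω | ∀ i : Fin n, ω (i : ℕ) = g i}) := by
    intro g _ g' _ hne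
    refine Set.disjoint_left.2 fun ω hω hω' => hne ?_
    funext i
    rw [← hω i, ← hω' i]
  rw [hset, measure_biUnion_finset hdisj (fun g _ => cyl_measurable n g),
    Finset.prod_univ_sum]
  exact Finset.sum_congr rfl fun g _ => hμ n g

lemma isProb (hμ : IsIT p μ) : IsProbabilityMeasure μ := by
  constructor
  have h := hμ 0 (fun i => i.elim0)
  have h0 : {ω : ℕ → Ω | ∀ i : Fin 0, ω (i : ℕ) = i.elim0} = Set.univ := by
    ext ω; simp
  rw [h0] at h
  simpa using h

lemma sum_ofReal_eq_one (hp : ∀ i, p i ∈ probVec Ω) (i : ℕ) :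
    ∑ a : Ω, ENNReal.ofReal (p i a) = 1 := by
  rw [← ENNReal.ofReal_sum_of_nonneg (fun a _ => (hp i).1 a), (hp i).2,
    ENNReal.ofReal_one]

lemma meas_single (hμ : IsIT p μ) (hp : ∀ i, p i ∈ probVec Ω) (i : ℕ) (x : Ω) :
    μ {ω | ω i = x} = ENNReal.ofReal (p i x) := by
  classical
  set A : Fin (i + 1) → Finset Ω :=
    fun j => if j = Fin.last i then {x} else Finset.univ with hA
  have hset : {ω : ℕ → Ω | ∀ j : Fin (i + 1), ω (j : ℕ) ∈ A j} = {ω | ω i = x} := by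
    ext ω
    simp only [Set.mem_setOf_eq]
    constructor
    · intro h
      have := h (Fin.last i)
      simpa [hA, Fin.val_last] using this
    · intro h j
      by_cases hj : j = Fin.last i
      · subst hj; simpa [hA, Fin.val_last] using h
      · simp [hA, hj]
  rw [← hset, key hμ (i + 1) A,
    Finset.prod_eq_single (Fin.last i)
      (fun j _ hj => by
        simp only [hA, if_neg hj]
        exact sum_ofReal_eq_one hp _)
      (fun h => absurd (Finset.mem_univ _) h)]
  simp [hA, Fin.val_last]

lemma meas_pair (hμ : IsIT p μ) (hp : ∀ i, p i ∈ probVec Ω) {i j : ℕ} (hij : i ≠ j)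
    (x y : Ω) :
    μ {ω | ω i = x ∧ ω j = y} = ENNReal.ofReal (p i x) * ENNReal.ofReal (p j y) := by
  classical
  set n := max i j + 1 with hn
  have hi : i < n := lt_of_le_of_lt (le_max_left _ _) (Nat.lt_succ_self _)
  have hj : j < n := lt_of_le_of_lt (le_max_right _ _) (Nat.lt_succ_self _)
  set i0 : Fin n := ⟨i, hi⟩ with hi0
  set j0 : Fin n := ⟨j, hj⟩ with hj0
  have hij0 : i0 ≠ j0 := by
    simp only [hi0, hj0, ne_eq, Fin.mk.injEq]; exact hij
  set A : Fin n → Finset Ω :=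
    fun k => if k = i0 then {x} else if k = j0 then {y} else Finset.univ with hA
  have hset : {ω : ℕ → Ω | ∀ k : Fin n, ω (k : ℕ) ∈ A k} = {ω | ω i = x ∧ ω j = y} := by
    ext ω
    simp only [Set.mem_setOf_eq]
    constructor
    · intro h
      refine ⟨?_, ?_⟩
      · have := h i0; simpa [hA] using this
      · have := h j0; simpa [hA, if_neg hij0.symm] using this
    · rintro ⟨h1, h2⟩ k
      rcases eq_or_ne k i0 with rfl | hk1
      · simpa [hA] using h1
      · rcases eq_or_ne k j0 with rfl | hk2
        · simpa [hA, if_neg hij0.symm] using h2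
        · simp [hA, hk1, hk2]
  rw [← hset, key hμ n A]
  have hprod : ∏ k : Fin n, (∑ a ∈ A k, ENNReal.ofReal (p (k : ℕ) a)) =
      ∏ k ∈ ({i0, j0} : Finset (Fin n)), ∑ a ∈ A k, ENNReal.ofReal (p (k : ℕ) a) := by
    symm
    apply Finset.prod_subset (Finset.subset_univ _)
    intro k _ hk
    simp only [Finset.mem_insert, Finset.mem_singleton, not_or] at hk
    simp only [hA, if_neg hk.1, if_neg hk.2]
    exact sum_ofReal_eq_one hp _
  rw [hprod, Finset.prod_insert (by simpa using hij0), Finset.prod_singleton]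
  simp [hA, if_neg hij0.symm]
  rfl

end aux

set_option linter.unusedSectionVars false


-- deterministic helpers
lemma natSqrt_tendsto : Tendsto Nat.sqrt atTop atTop := by
  apply tendsto_atTop_atTop.2
  intro b
  refine ⟨b * b, fun n hn => ?_⟩
  exact Nat.le_sqrt.2 hn

lemma sqrt_trick {u : ℕ → ℝ}
    (hbd : ∀ m n : ℕ, m ≤ n → |u n - u m| ≤ (n : ℝ) - (m : ℝ))
    (h : Tendsto (fun k => u (k ^ 2) / ((k : ℝ) ^ 2)) atTop (𝓝 0)) :
    Tendsto (fun n => u n / (n : ℝ)) atTop (𝓝 0) := by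
  have hG : Tendsto (fun k : ℕ => |u (k ^ 2)| / ((k : ℝ) ^ 2) + 2 / (k : ℝ)) atTop (𝓝 0) := by
    have h1 : Tendsto (fun k : ℕ => |u (k ^ 2)| / ((k : ℝ) ^ 2)) atTop (𝓝 0) := by
      have := h.abs
      simpa [abs_div, abs_of_nonneg (sq_nonneg (_ : ℝ))] using this
    have h2 : Tendsto (fun k : ℕ => 2 / (k : ℝ)) atTop (𝓝 0) :=
      tendsto_const_div_atTop_nhds_zero_nat 2
    simpa using h1.add h2
  have hcomp := hG.comp natSqrt_tendsto
  apply squeeze_zero_norm' ?_ hcomp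
  filter_upwards [eventually_ge_atTop 1] with n hn
  set k := Nat.sqrt n with hk
  have hk1 : 1 ≤ k := Nat.sqrt_pos.2 hn
  have hkn : k ^ 2 ≤ n := Nat.sqrt_le' n
  have hn2 : n ≤ k ^ 2 + 2 * k := by
    have h3 := Nat.lt_succ_sqrt' n
    rw [← hk] at h3
    nlinarith [h3]
  have hkR : (0:ℝ) < (k:ℝ) := by exact_mod_cast hk1
  have hnR : (0:ℝ) < (n:ℝ) := by exact_mod_cast hn
  have hknR : ((k:ℝ))^2 ≤ (n:ℝ) := by exact_mod_cast hkn
  have hub : |u n| ≤ |u (k ^ 2)| + 2 * k := by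
    have h3 := hbd (k ^ 2) n hkn
    have h5 : |u n| ≤ |u (k^2)| + |u n - u (k^2)| := by
      have := abs_sub_abs_le_abs_sub (u n) (u (k^2))
      linarith
    have h4 : (n : ℝ) - ((k^2 : ℕ) : ℝ) ≤ 2 * k := by
      push_cast
      have : (n:ℝ) ≤ (k:ℝ)^2 + 2*k := by exact_mod_cast hn2
      linarith
    have h6 : ((k ^ 2 : ℕ) : ℝ) = ((k:ℝ))^2 := by push_cast; ring
    calc |u n| ≤ |u (k^2)| + |u n - u (k^2)| := h5
      _ ≤ |u (k^2)| + ((n : ℝ) - ((k^2:ℕ):ℝ)) := by linarith [h3]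
      _ ≤ |u (k^2)| + 2 * k := by linarith [h4]
  rw [Real.norm_eq_abs, abs_div, abs_of_nonneg hnR.le]
  show |u n| / (n:ℝ) ≤ |u (k ^ 2)| / ((k : ℝ) ^ 2) + 2 / (k : ℝ)
  calc |u n| / (n:ℝ) ≤ (|u (k^2)| + 2*(k:ℝ)) / ((k:ℝ)^2) := by
        gcongr
      _ = |u (k^2)| / ((k:ℝ))^2 + 2/(k:ℝ) := by
        field_simp


lemma mapClusterPt_of_sub {E : Type*} [NormedAddCommGroup E] {a b : ℕ → E}
    (h : Tendsto (fun n => a n - b n) atTop (𝓝 0)) (c : E)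
    (hc : MapClusterPt c atTop a) : MapClusterPt c atTop b := by
  rw [mapClusterPt_iff_frequently] at hc ⊢
  intro s hs
  obtain ⟨ε, hε, hball⟩ := Metric.mem_nhds_iff.1 hs
  have h2 : ∀ᶠ n in atTop, ‖a n - b n‖ < ε / 2 := by
    have h3 := Metric.tendsto_nhds.1 h (ε / 2) (by positivity)
    simpa [dist_zero_right] using h3
  have h3 := hc (Metric.ball c (ε / 2)) (Metric.ball_mem_nhds c (by positivity))
  refine ((h3.and_eventually h2).mono ?_)
  rintro n ⟨hn1, hn2⟩
  apply hball
  have : dist (b n) c ≤ dist (b n) (a n) + dist (a n) c := dist_triangle _ _ _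
  have hd : dist (b n) (a n) = ‖a n - b n‖ := by rw [dist_eq_norm, norm_sub_rev]
  have : dist (b n) c < ε := by
    rw [Metric.mem_ball] at hn1
    calc dist (b n) c ≤ dist (b n) (a n) + dist (a n) c := dist_triangle _ _ _
      _ < ε / 2 + ε / 2 := by rw [hd]; exact add_lt_add hn2 hn1
      _ = ε := by ring
  exact this

lemma clusterPts_congr {E : Type*} [NormedAddCommGroup E] {a b : ℕ → E}
    (h : Tendsto (fun n => a n - b n) atTop (𝓝 0)) : clusterPts a = clusterPts b := by
  have h' : Tendsto (fun n => b n - a n) atTop (𝓝 0) := by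
    have := h.neg
    simpa [neg_sub] using this
  ext c
  exact ⟨mapClusterPt_of_sub h c, mapClusterPt_of_sub h' c⟩

-- Euclidean tendsto via coordinates
example {Ω : Type*} [Fintype Ω] (d : ℕ → EuclideanSpace ℝ Ω)
    (h : ∀ x, Tendsto (fun n => d n x) atTop (𝓝 0)) :
    Tendsto d atTop (𝓝 0) := by
  have hT : Tendsto (fun n => (EuclideanSpace.equiv Ω ℝ) (d n)) atTop (𝓝 0) := by
    rw [tendsto_pi_nhds]
    intro x
    simpa using h x
  have := ((EuclideanSpace.equiv Ω ℝ).symm.continuous.tendsto 0).comp hT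
  simpa [Function.comp_def] using this

-- cesaro coordinate
example {Ω : Type*} [Fintype Ω] (p : ℕ → EuclideanSpace ℝ Ω) (n : ℕ) (x : Ω) :
    ((n : ℝ)⁻¹ • ∑ i ∈ Finset.range n, p i) x = (∑ i ∈ Finset.range n, p i x) / n := by
  have hs : (∑ i ∈ Finset.range n, p i) x = ∑ i ∈ Finset.range n, p i x :=
    by rw [WithLp.ofLp_sum, Finset.sum_apply]
  rw [PiLp.smul_apply, hs, smul_eq_mul, div_eq_inv_mul]


section slln
variable {Ω : Type*} [Fintype Ω] [DecidableEq Ω] [MeasurableSpace Ω]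
    [MeasurableSingletonClass Ω]
variable {p : ℕ → EuclideanSpace ℝ Ω} {μ : Measure (ℕ → Ω)} [IsProbabilityMeasure μ]

-- assumed (proved elsewhere)
variable (hms : ∀ (i : ℕ) (x : Ω), μ {ω | ω i = x} = ENNReal.ofReal (p i x))
variable (hmp : ∀ {i j : ℕ}, i ≠ j → ∀ (x y : Ω),
  μ {ω | ω i = x ∧ ω j = y} = ENNReal.ofReal (p i x) * ENNReal.ofReal (p j y))
variable (hp : ∀ i, (∀ x, 0 ≤ p i x) ∧ ∑ x, p i x = 1)

include hms hmp hp in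
lemma slln_core (x : Ω) :
    ∀ᵐ ω ∂μ, Tendsto (fun n => (∑ i ∈ Finset.range n,
      ((if ω i = x then (1:ℝ) else 0) - p i x)) / (n : ℝ)) atTop (𝓝 0) := by
  classical
  set E : ℕ → Set (ℕ → Ω) := fun i => {ω | ω i = x} with hE
  have hEm : ∀ i, MeasurableSet (E i) := fun i =>
    (measurableSet_singleton x).preimage (measurable_pi_apply i)
  set f : ℕ → (ℕ → Ω) → ℝ :=
    fun i ω => (E i).indicator (fun _ => (1:ℝ)) ω - p i x with hf
  set S : ℕ → (ℕ → Ω) → ℝ := fun n ω => ∑ i ∈ Finset.range n, f i ω with hS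
  have hc0 : ∀ i, 0 ≤ p i x := fun i => (hp i).1 x
  have hc1 : ∀ i, p i x ≤ 1 := fun i => by
    have := Finset.single_le_sum (fun a _ => (hp i).1 a) (Finset.mem_univ x)
    rw [(hp i).2] at this
    exact this
  have hIndInt : ∀ (s : Set (ℕ → Ω)), MeasurableSet s →
      Integrable (s.indicator fun _ => (1:ℝ)) μ :=
    fun s hs => (integrable_const (1:ℝ)).indicator hs
  have hfabs : ∀ i ω, |f i ω| ≤ 1 := by
    intro i ω
    simp only [hf, Set.indicator_apply]
    split_ifs with h <;>
      (rw [abs_le]; constructor <;> [linarith [hc1 i]; linarith [hc0 i]])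
  -- pointwise product expansion
  have hpt : ∀ i j ω, f i ω * f j ω =
      (E i ∩ E j).indicator (fun _ => (1:ℝ)) ω
        - p i x * (E j).indicator (fun _ => (1:ℝ)) ω
        - p j x * (E i).indicator (fun _ => (1:ℝ)) ω
        + p i x * p j x := by
    intro i j ω
    by_cases h1 : ω ∈ E i <;> by_cases h2 : ω ∈ E j <;>
      simp [hf, Set.indicator_apply, h1, h2, Set.mem_inter_iff] <;> ring
  have hfmulInt : ∀ i j, Integrable (fun ω => f i ω * f j ω) μ := by
    intro i j
    have : (fun ω => f i ω * f j ω) =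
        fun ω => (E i ∩ E j).indicator (fun _ => (1:ℝ)) ω
          - p i x * (E j).indicator (fun _ => (1:ℝ)) ω
          - p j x * (E i).indicator (fun _ => (1:ℝ)) ω
          + p i x * p j x := funext (hpt i j)
    rw [this]
    exact (((hIndInt _ ((hEm i).inter (hEm j))).sub
      ((hIndInt _ (hEm j)).const_mul _)).sub
      ((hIndInt _ (hEm i)).const_mul _)).add (integrable_const _)
  have hIndVal : ∀ (s : Set (ℕ → Ω)) (hs : MeasurableSet s),
      ∫ ω, s.indicator (fun _ => (1:ℝ)) ω ∂μ = (μ s).toReal := by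
    intro s hs
    rw [integral_indicator_const (1:ℝ) hs, smul_eq_mul, mul_one, measureReal_def]
  -- integral of products
  have hmulval : ∀ i j, i ≠ j → ∫ ω, f i ω * f j ω ∂μ = 0 := by
    intro i j hij
    have hrw : (fun ω => f i ω * f j ω) =
        fun ω => (E i ∩ E j).indicator (fun _ => (1:ℝ)) ω
          - p i x * (E j).indicator (fun _ => (1:ℝ)) ω
          - p j x * (E i).indicator (fun _ => (1:ℝ)) ω
          + p i x * p j x := funext (hpt i j)
    rw [hrw]
    rw [integral_add (by
        exact ((hIndInt _ ((hEm i).inter (hEm j))).sub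
          ((hIndInt _ (hEm j)).const_mul _)).sub ((hIndInt _ (hEm i)).const_mul _))
      (integrable_const _),
      integral_sub (by
        exact (hIndInt _ ((hEm i).inter (hEm j))).sub ((hIndInt _ (hEm j)).const_mul _))
        ((hIndInt _ (hEm i)).const_mul _),
      integral_sub (hIndInt _ ((hEm i).inter (hEm j)))
        ((hIndInt _ (hEm j)).const_mul _),
      integral_const_mul, integral_const_mul,
      hIndVal _ ((hEm i).inter (hEm j)), hIndVal _ (hEm j), hIndVal _ (hEm i)]
    have hEE : E i ∩ E j = {ω : ℕ → Ω | ω i = x ∧ ω j = x} := by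
      ext ω; simp [hE, Set.mem_inter_iff]
    rw [hEE, hmp hij x x, hms i x, hms j x]
    rw [ENNReal.toReal_mul, ENNReal.toReal_ofReal (hc0 i), ENNReal.toReal_ofReal (hc0 j)]
    simp only [integral_const, measure_univ, probReal_univ, ENNReal.toReal_one, smul_eq_mul, one_mul]
    ring
  have hsqle : ∀ i, ∫ ω, f i ω * f i ω ∂μ ≤ 1 := by
    intro i
    have hb : ∀ ω, f i ω * f i ω ≤ 1 := by
      intro ω
      have := hfabs i ω
      nlinarith [abs_nonneg (f i ω), sq_abs (f i ω)]
    calc ∫ ω, f i ω * f i ω ∂μ ≤ ∫ _ω, (1:ℝ) ∂μ :=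
          integral_mono (hfmulInt i i) (integrable_const _) hb
      _ = 1 := by simp
  -- second moment of S n
  have hSsq : ∀ n ω, S n ω ^ 2 =
      ∑ i ∈ Finset.range n, ∑ j ∈ Finset.range n, f i ω * f j ω := by
    intro n ω
    rw [hS, sq, Finset.sum_mul_sum]
  have hSInt : ∀ n, Integrable (fun ω => S n ω ^ 2) μ := by
    intro n
    have : (fun ω => S n ω ^ 2) =
        fun ω => ∑ i ∈ Finset.range n, ∑ j ∈ Finset.range n, f i ω * f j ω :=
      funext (hSsq n)
    rw [this]
    exact integrable_finset_sum _ fun i _ => integrable_finset_sum _ fun j _ => hfmulInt i j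
  have hES : ∀ n, ∫ ω, S n ω ^ 2 ∂μ ≤ (n : ℝ) := by
    intro n
    have h1 : (fun ω => S n ω ^ 2) =
        fun ω => ∑ i ∈ Finset.range n, ∑ j ∈ Finset.range n, f i ω * f j ω :=
      funext (hSsq n)
    rw [h1, integral_finset_sum _ fun i _ =>
      integrable_finset_sum _ fun j _ => hfmulInt i j]
    have h2 : ∀ i ∈ Finset.range n,
        (∫ ω, ∑ j ∈ Finset.range n, f i ω * f j ω ∂μ) ≤ 1 := by
      intro i hi
      rw [integral_finset_sum _ fun j _ => hfmulInt i j]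
      rw [Finset.sum_eq_single_of_mem i hi (fun j _ hji => hmulval i j (Ne.symm hji))]
      exact hsqle i
    calc (∑ i ∈ Finset.range n, ∫ ω, ∑ j ∈ Finset.range n, f i ω * f j ω ∂μ)
        ≤ ∑ _i ∈ Finset.range n, (1:ℝ) := Finset.sum_le_sum h2
      _ = (n : ℝ) := by simp
  -- Chebyshev events
  have hcheb : ∀ (ε : ℝ), 0 < ε → ∀ k : ℕ,
      μ {ω | ε ≤ |S (k ^ 2) ω| / ((k : ℝ) ^ 2)} ≤
        ENNReal.ofReal (1 / (ε ^ 2 * (k : ℝ) ^ 2)) := by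
    intro ε hε k
    rcases Nat.eq_zero_or_pos k with rfl | hk
    · have : {ω : ℕ → Ω | ε ≤ |S (0 ^ 2) ω| / ((0 : ℕ) : ℝ) ^ 2} = ∅ := by
        ext ω
        simp only [Set.mem_setOf_eq, Set.mem_empty_iff_false, iff_false, not_le]
        have hS0 : S (0 ^ 2) ω = 0 := by simp [hS]
        rw [hS0]
        simpa using hε
      rw [this]
      simp
    · have hkR : (0:ℝ) < (k:ℝ) := by exact_mod_cast hk
      have hk2 : (0:ℝ) < (k:ℝ)^2 := by positivity
      set c : ℝ := (ε * (k:ℝ)^2)^2 with hcdef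
      have hcpos : 0 < c := by positivity
      have hsub : {ω : ℕ → Ω | ε ≤ |S (k ^ 2) ω| / ((k : ℝ) ^ 2)} ⊆
          {ω | c ≤ S (k ^ 2) ω ^ 2} := by
        intro ω hω
        simp only [Set.mem_setOf_eq] at hω ⊢
        have h1 : ε * (k:ℝ)^2 ≤ |S (k ^ 2) ω| := (le_div_iff₀ hk2).1 hω
        have h2 : c ≤ |S (k ^ 2) ω| ^ 2 := by
          rw [hcdef]
          exact pow_le_pow_left₀ (by positivity) h1 2
        rwa [sq_abs] at h2
      have hmark := mul_meas_ge_le_integral_of_nonneg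
        (μ := μ) (f := fun ω => S (k ^ 2) ω ^ 2)
        (ae_of_all _ fun ω => sq_nonneg _) (hSInt (k ^ 2)) c
      have hn : (∫ ω, S (k ^ 2) ω ^ 2 ∂μ) ≤ ((k ^ 2 : ℕ) : ℝ) := hES (k ^ 2)
      have hcast : ((k ^ 2 : ℕ) : ℝ) = (k : ℝ) ^ 2 := by push_cast; ring
      have htr : (μ {ω | c ≤ S (k ^ 2) ω ^ 2}).toReal ≤ 1 / (ε ^ 2 * (k : ℝ) ^ 2) := by
        have h3 : c * (μ {ω | c ≤ S (k ^ 2) ω ^ 2}).toReal ≤ (k : ℝ) ^ 2 := by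
          calc c * (μ {ω | c ≤ S (k ^ 2) ω ^ 2}).toReal
              ≤ ∫ ω, S (k ^ 2) ω ^ 2 ∂μ := hmark
            _ ≤ (k : ℝ) ^ 2 := by rw [← hcast]; exact hn
        have h4 : (μ {ω | c ≤ S (k ^ 2) ω ^ 2}).toReal ≤ (k : ℝ) ^ 2 / c :=
          (le_div_iff₀' hcpos).2 h3
        have h5 : (k : ℝ) ^ 2 / c = 1 / (ε ^ 2 * (k : ℝ) ^ 2) := by
          rw [hcdef]
          field_simp
        rwa [h5] at h4
      calc μ {ω | ε ≤ |S (k ^ 2) ω| / ((k : ℝ) ^ 2)}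
          ≤ μ {ω | c ≤ S (k ^ 2) ω ^ 2} := measure_mono hsub
        _ ≤ ENNReal.ofReal (1 / (ε ^ 2 * (k : ℝ) ^ 2)) := by
            rw [ENNReal.le_ofReal_iff_toReal_le (measure_ne_top μ _) (by positivity)]
            exact htr
  -- Borel-Cantelli along squares
  have hBC : ∀ m : ℕ, ∀ᵐ ω ∂μ, ∀ᶠ k in atTop,
      |S (k ^ 2) ω| / ((k : ℝ) ^ 2) < 1 / ((m : ℝ) + 1) := by
    intro m
    set ε : ℝ := 1 / ((m : ℝ) + 1) with hεdef
    have hε : 0 < ε := by positivity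
    have hsum : (∑' k : ℕ, μ {ω | ε ≤ |S (k ^ 2) ω| / ((k : ℝ) ^ 2)}) ≠ ⊤ := by
      have hsum1 : Summable (fun k : ℕ => 1 / (ε ^ 2 * (k : ℝ) ^ 2)) := by
        have h0 : Summable (fun k : ℕ => 1 / ((k : ℝ) ^ 2)) :=
          Real.summable_one_div_nat_pow.2 one_lt_two
        have : (fun k : ℕ => 1 / (ε ^ 2 * (k : ℝ) ^ 2)) =
            fun k : ℕ => (1 / ε ^ 2) * (1 / ((k : ℝ) ^ 2)) := by
          funext k; field_simp
        rw [this]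
        exact h0.mul_left _
      have hle : (∑' k : ℕ, μ {ω | ε ≤ |S (k ^ 2) ω| / ((k : ℝ) ^ 2)}) ≤
          ∑' k : ℕ, ENNReal.ofReal (1 / (ε ^ 2 * (k : ℝ) ^ 2)) :=
        ENNReal.tsum_le_tsum fun k => hcheb ε hε k
      have hne : (∑' k : ℕ, ENNReal.ofReal (1 / (ε ^ 2 * (k : ℝ) ^ 2))) ≠ ⊤ := by
        rw [← ENNReal.ofReal_tsum_of_nonneg (fun k => by positivity) hsum1]
        exact ENNReal.ofReal_ne_top
      exact ne_top_of_le_ne_top hne hle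
    have := ae_eventually_notMem hsum
    filter_upwards [this] with ω hω
    filter_upwards [hω] with k hk
    simp only [Set.mem_setOf_eq, not_le] at hk
    exact hk
  have haeall : ∀ᵐ ω ∂μ, ∀ m : ℕ, ∀ᶠ k in atTop,
      |S (k ^ 2) ω| / ((k : ℝ) ^ 2) < 1 / ((m : ℝ) + 1) := ae_all_iff.2 hBC
  filter_upwards [haeall] with ω hω
  -- convergence along squares
  have hsq : Tendsto (fun k => S (k ^ 2) ω / ((k : ℝ) ^ 2)) atTop (𝓝 0) := by
    rw [Metric.tendsto_atTop]
    intro ε hε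
    obtain ⟨m, hm⟩ := exists_nat_one_div_lt hε
    obtain ⟨N, hN⟩ := (eventually_atTop.1 (hω m))
    refine ⟨N, fun k hk => ?_⟩
    rw [Real.dist_eq, sub_zero, abs_div, abs_of_nonneg (sq_nonneg ((k:ℝ)))]
    calc |S (k ^ 2) ω| / ((k : ℝ) ^ 2) < 1 / ((m : ℝ) + 1) := hN k hk
      _ < ε := hm
  -- extend to all n via sqrt trick
  have hbd : ∀ m n : ℕ, m ≤ n → |S n ω - S m ω| ≤ (n : ℝ) - (m : ℝ) := by
    intro m n hmn
    have h1 : S n ω - S m ω = ∑ i ∈ Finset.Ico m n, f i ω := by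
      rw [hS]
      rw [Finset.sum_Ico_eq_sub _ hmn]
    rw [h1]
    calc |∑ i ∈ Finset.Ico m n, f i ω| ≤ ∑ i ∈ Finset.Ico m n, |f i ω| :=
          Finset.abs_sum_le_sum_abs _ _
      _ ≤ ∑ _i ∈ Finset.Ico m n, (1:ℝ) := Finset.sum_le_sum fun i _ => hfabs i ω
      _ = ((n - m : ℕ) : ℝ) := by simp [Nat.card_Ico]
      _ = (n : ℝ) - (m : ℝ) := by
          rw [Nat.cast_sub hmn]
  have htend := sqrt_trick hbd hsq
  -- identify the statement's sum with S
  have hid : ∀ n, (∑ i ∈ Finset.range n,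
      ((if ω i = x then (1:ℝ) else 0) - p i x)) = S n ω := by
    intro n
    rw [hS]
    refine Finset.sum_congr rfl fun i _ => ?_
    rw [hf]
    congr 1
    simp [Set.indicator_apply, hE]
  simpa only [hid] using htend

end slln
theorem stmt1 {Ω : Type*} [Fintype Ω] [DecidableEq Ω] [MeasurableSpace Ω]
    [MeasurableSingletonClass Ω] (hcard : 1 < Fintype.card Ω)
    (p : ℕ → EuclideanSpace ℝ Ω) (hp : ∀ i, p i ∈ probVec Ω)
    (μ : Measure (ℕ → Ω)) (hμ : IsIT p μ) :
    μ {ω | clusterPts (relFreq ω) = clusterPts (cesaro p)} = 1 := by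
  classical
  haveI := isProb hμ
  have hms : ∀ (i : ℕ) (x : Ω), μ {ω | ω i = x} = ENNReal.ofReal (p i x) :=
    fun i x => meas_single hμ hp i x
  have hmp : ∀ {i j : ℕ}, i ≠ j → ∀ (x y : Ω),
      μ {ω | ω i = x ∧ ω j = y} = ENNReal.ofReal (p i x) * ENNReal.ofReal (p j y) :=
    fun hij x y => meas_pair hμ hp hij x y
  have hp' : ∀ i, (∀ x, 0 ≤ p i x) ∧ ∑ x, p i x = 1 := fun i => hp i
  have hae : ∀ᵐ ω ∂μ, ∀ x : Ω, Tendsto (fun n => (∑ i ∈ Finset.range n,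
      ((if ω i = x then (1:ℝ) else 0) - p i x)) / (n : ℝ)) atTop (𝓝 0) :=
    ae_all_iff.2 fun x => slln_core hms hmp hp' x
  have hsub : ∀ ω : ℕ → Ω,
      (∀ x : Ω, Tendsto (fun n => (∑ i ∈ Finset.range n,
        ((if ω i = x then (1:ℝ) else 0) - p i x)) / (n : ℝ)) atTop (𝓝 0)) →
      clusterPts (relFreq ω) = clusterPts (cesaro p) := by
    intro ω hω
    apply clusterPts_congr
    have hco : ∀ (n : ℕ) (x : Ω), (relFreq ω n - cesaro p n) x =
        (∑ i ∈ Finset.range n, ((if ω i = x then (1:ℝ) else 0) - p i x)) / (n : ℝ) := by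
      intro n x
      have h1 : relFreq ω n x
          = (∑ i ∈ Finset.range n, (if ω i = x then (1:ℝ) else 0)) / n := by
        rw [Finset.sum_boole]
        rfl
      have h2 : cesaro p n x = (∑ i ∈ Finset.range n, p i x) / n := by
        rw [cesaro]
        have hs : (∑ i ∈ Finset.range n, p i) x = ∑ i ∈ Finset.range n, p i x :=
          by rw [WithLp.ofLp_sum, Finset.sum_apply]
        rw [PiLp.smul_apply, hs, smul_eq_mul, div_eq_inv_mul]
      have h3 : (relFreq ω n - cesaro p n) x = relFreq ω n x - cesaro p n x := rfl
      rw [h3, h1, h2, ← sub_div, ← Finset.sum_sub_distrib]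
    have hT : Tendsto (fun n => (EuclideanSpace.equiv Ω ℝ)
        (relFreq ω n - cesaro p n)) atTop (𝓝 0) := by
      rw [tendsto_pi_nhds]
      intro x
      have h4 := hω x
      have h5 : (fun n => (EuclideanSpace.equiv Ω ℝ) (relFreq ω n - cesaro p n) x)
          = fun n => (∑ i ∈ Finset.range n,
            ((if ω i = x then (1:ℝ) else 0) - p i x)) / (n : ℝ) :=
        funext fun n => hco n x
      rw [h5]
      exact h4
    have h6 := ((EuclideanSpace.equiv Ω ℝ).symm.continuous.tendsto 0).comp hT
    simpa only [Function.comp_def, ContinuousLinearEquiv.symm_apply_apply, map_zero] using h6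
  have h1 : ∀ᵐ ω' ∂μ, ω' ∈ {ω | clusterPts (relFreq ω) = clusterPts (cesaro p)} :=
    hae.mono fun ω h => hsub ω h
  set Sgood := {ω : ℕ → Ω | clusterPts (relFreq ω) = clusterPts (cesaro p)} with hSg
  have h2 : μ Sgoodᶜ = 0 := by
    rw [ae_iff] at h1
    exact h1
  refine le_antisymm prob_le_one ?_
  calc (1:ENNReal) = μ Set.univ := measure_univ.symm
    _ = μ (Sgood ∪ Sgoodᶜ) := by rw [Set.union_compl_self]
    _ ≤ μ Sgood + μ Sgoodᶜ := measure_union_le _ _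
    _ = μ Sgood := by rw [h2, add_zero]
end

section
/- Let Ω be a finite set with k := |Ω| > 1, let ω = (ω_1, ω_2, …) ∈ Ω^ℕ be any sequence, and let ℓ : Ω → ℝ be any function. Then the set of cluster points of the averages of ℓ equals the image of the set of cluster points of the relative frequencies under expectation: CP(n ↦ (1/n)∑_{i=1}^n ℓ(ω_i)) = {E_p[ℓ] : p ∈ CP(n ↦ r_n(ω))}, where E_p[ℓ] = ∑_{x ∈ Ω} ℓ(x)·p({x}). -/
open MeasureTheory Filter Topology

/-- The cluster points of the averages of a gamble `ℓ` along a data sequence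
are exactly the expectations of `ℓ` under the cluster points of the relative frequencies. -/
theorem stmt5 {Ω : Type*} [Fintype Ω] [DecidableEq Ω] (hcard : 1 < Fintype.card Ω)
    (ω : ℕ → Ω) (ℓ : Ω → ℝ) :
    clusterPts (fun n => (n : ℝ)⁻¹ * ∑ i ∈ Finset.range n, ℓ (ω i)) =
      (fun p : EuclideanSpace ℝ Ω => ∑ x, ℓ x * p x) '' clusterPts (relFreq ω) := by
  set f : EuclideanSpace ℝ Ω → ℝ := fun p => ∑ x, ℓ x * p x with hf_def
  have hf : Continuous f := by
    apply continuous_finset_sum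
    intro x _
    exact continuous_const.mul (EuclideanSpace.proj x).continuous
  have key : (fun n : ℕ => (n : ℝ)⁻¹ * ∑ i ∈ Finset.range n, ℓ (ω i)) = f ∘ relFreq ω := by
    funext n
    have hsum : ∑ i ∈ Finset.range n, ℓ (ω i)
        = ∑ x : Ω, (((Finset.range n).filter fun i => ω i = x).card : ℝ) * ℓ x := by
      rw [← Finset.sum_fiberwise_of_maps_to (fun i _ => Finset.mem_univ (ω i))
        (fun i => ℓ (ω i))]
      refine Finset.sum_congr rfl fun x _ => ?_
      rw [Finset.sum_congr rfl fun i hi => by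
        rw [(Finset.mem_filter.mp hi).2], Finset.sum_const, nsmul_eq_mul]
    simp only [Function.comp, hf_def, relFreq, PiLp.toLp_apply, hsum, Finset.mul_sum]
    refine Finset.sum_congr rfl fun x _ => ?_
    rw [div_eq_mul_inv]; ring
  rw [key]
  ext c
  constructor
  · intro hc
    obtain ⟨φ, hφ, hlim⟩ := TopologicalSpace.FirstCountableTopology.tendsto_subseq hc
    have hbd : ∀ m : ℕ, relFreq ω (φ m) ∈
        Metric.closedBall (0 : EuclideanSpace ℝ Ω) (Real.sqrt (Fintype.card Ω)) := by
      intro m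
      rw [Metric.mem_closedBall, dist_zero_right, EuclideanSpace.norm_eq]
      apply Real.sqrt_le_sqrt
      calc ∑ x, ‖relFreq ω (φ m) x‖ ^ 2 ≤ ∑ _x : Ω, (1 : ℝ) := by
            refine Finset.sum_le_sum fun x _ => ?_
            have h0 : (0:ℝ) ≤ relFreq ω (φ m) x := by
              unfold relFreq; positivity
            have h1 : relFreq ω (φ m) x ≤ 1 := by
              unfold relFreq
              apply div_le_one_of_le₀
              · have hle := (Finset.card_filter_le (Finset.range (φ m)) (fun i => ω i = x)).trans_eq
                  (Finset.card_range _)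
                exact Nat.cast_le.mpr hle
              · positivity
            rw [Real.norm_eq_abs, abs_of_nonneg h0]
            nlinarith
        _ = (Fintype.card Ω : ℝ) := by simp
    obtain ⟨p, _, ψ, hψ, hplim⟩ :=
      tendsto_subseq_of_bounded Metric.isBounded_closedBall hbd
    have hσ : Tendsto (φ ∘ ψ) atTop atTop :=
      (hφ.comp hψ).tendsto_atTop
    have hplim' : Tendsto (relFreq ω ∘ (φ ∘ ψ)) atTop (𝓝 p) := hplim
    refine ⟨p, MapClusterPt.of_comp hσ hplim'.mapClusterPt, ?_⟩
    have h1 : Tendsto ((f ∘ relFreq ω) ∘ (φ ∘ ψ)) atTop (𝓝 (f p)) :=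
      (hf.tendsto p).comp hplim'
    have h2 : Tendsto ((f ∘ relFreq ω) ∘ (φ ∘ ψ)) atTop (𝓝 c) := by
      have := hlim.comp hψ.tendsto_atTop
      exact this
    exact tendsto_nhds_unique h1 h2
  · rintro ⟨p, hp, rfl⟩
    exact hp.continuousAt_comp hf.continuousAt
end

section
/- Let k > 1 and let M ⊆ Δ^k be nonempty. Let p be an element of the convex hull of M, let a = (a_1, …, a_u) ∈ (Δ^k)^u with q := r(a) satisfying ‖q − p‖ < δ, and suppose δ > 0 is such that there exists v ∈ ℕ, v ≥ 1, with 2v/(u+v) ≤ δ and 4(k+1)/v ≤ δ. Then there exist b_1, …, b_v ∈ M such that ‖r(a ⌢ (b_1, …, b_v)) − p‖ < δ, and moreover ‖r(a ⌢ (b_1, …, b_i)) − p‖ < 2δ for all 0 ≤ i ≤ v. -/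
open MeasureTheory Filter Topology

lemma probVec_convex (Ω : Type*) [Fintype Ω] : Convex ℝ (probVec Ω) := by
  intro x hx y hy α β hα hβ hαβ
  refine ⟨fun i => by
    simpa using add_nonneg (mul_nonneg hα (hx.1 i)) (mul_nonneg hβ (hy.1 i)), ?_⟩
  simp only [PiLp.add_apply, PiLp.smul_apply, smul_eq_mul]
  rw [Finset.sum_add_distrib, ← Finset.mul_sum, ← Finset.mul_sum, hx.2, hy.2]
  linarith

lemma probVec_norm_le_one {Ω : Type*} [Fintype Ω] {x : EuclideanSpace ℝ Ω}
    (hx : x ∈ probVec Ω) : ‖x‖ ≤ 1 := by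
  rw [EuclideanSpace.norm_eq, Real.sqrt_le_one]
  calc ∑ i, ‖x i‖ ^ 2 = ∑ i, (x i) ^ 2 := by
        refine Finset.sum_congr rfl fun i _ => ?_
        rw [Real.norm_eq_abs, sq_abs]
    _ ≤ (∑ i, x i) ^ 2 := Finset.sum_sq_le_sq_sum_of_nonneg (fun i _ => hx.1 i)
    _ = 1 := by rw [hx.2]; norm_num

lemma avg_decomp {E : Type*} [NormedAddCommGroup E] [NormedSpace ℝ E]
    (A D p : E) (u i : ℝ) (hu : u ≠ 0) (hui : u + i ≠ 0) :
    (u + i)⁻¹ • (A + D) - p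
      = (u * (u + i)⁻¹) • (u⁻¹ • A - p) + (u + i)⁻¹ • (D - i • p) := by
  match_scalars <;> field_simp <;> ring

set_option maxHeartbeats 2000000 in
/-- **"Stay and grow" lemma.** If the current average `q = r(a)` of `u` simplex
points is within `δ` of `p ∈ conv(M)`, and `v` satisfies `2v/(u+v) ≤ δ` and `4(k+1)/v ≤ δ`,
then one can append `v` points of `M` so that the new average is again within `δ` of `p`,
never straying more than `2δ` from `p` along the way. -/
theorem stmt19 (k : ℕ) (hk : 1 < k)
    (M : Set (EuclideanSpace ℝ (Fin k))) (hM : M.Nonempty) (hMsub : M ⊆ probVec (Fin k))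
    (p : EuclideanSpace ℝ (Fin k)) (hp : p ∈ convexHull ℝ M)
    (u : ℕ) (hu : 1 ≤ u) (a : ℕ → EuclideanSpace ℝ (Fin k))
    (ha : ∀ j < u, a j ∈ probVec (Fin k))
    (δ : ℝ) (hδ : 0 < δ)
    (hqp : ‖(u : ℝ)⁻¹ • ∑ j ∈ Finset.range u, a j - p‖ < δ)
    (v : ℕ) (hv : 1 ≤ v)
    (hv1 : 2 * (v : ℝ) / ((u : ℝ) + (v : ℝ)) ≤ δ)
    (hv2 : 4 * ((k : ℝ) + 1) / (v : ℝ) ≤ δ) :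
    ∃ b : ℕ → EuclideanSpace ℝ (Fin k), (∀ j < v, b j ∈ M) ∧
      ‖((u : ℝ) + (v : ℝ))⁻¹ •
          (∑ j ∈ Finset.range u, a j + ∑ j ∈ Finset.range v, b j) - p‖ < δ ∧
      ∀ i : ℕ, i ≤ v →
        ‖((u : ℝ) + (i : ℝ))⁻¹ •
            (∑ j ∈ Finset.range u, a j + ∑ j ∈ Finset.range i, b j) - p‖ < 2 * δ := by
  classical
  have hpP : p ∈ probVec (Fin k) :=
    convexHull_min hMsub (probVec_convex (Fin k)) hp
  have hu0 : (0:ℝ) < (u:ℝ) := by exact_mod_cast hu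
  have hv0 : (0:ℝ) < (v:ℝ) := by exact_mod_cast hv
  -- Carathéodory
  obtain ⟨ι, hι, z, w, hzM, hzai, hw0, hw1, hwz⟩ :=
    eq_pos_convex_span_of_mem_convexHull hp
  letI : Fintype ι := hι
  set s := Fintype.card ι with hs
  have hcard : s ≤ k + 1 := by
    have h1 := hzai.card_le_finrank_succ
    have h2 : Module.finrank ℝ (vectorSpan ℝ (Set.range z)) ≤ k := by
      have h3 := Submodule.finrank_le (vectorSpan ℝ (Set.range z))
      simpa [finrank_euclideanSpace_fin] using h3
    omega
  set e := (Fintype.equivFin ι).symm with he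
  set zz : ℕ → EuclideanSpace ℝ (Fin k) :=
    fun j => if h : j < s then z (e ⟨j, h⟩) else hM.choose with hzz
  set ww : ℕ → ℝ := fun j => if h : j < s then w (e ⟨j, h⟩) else 0 with hww
  have hzzM : ∀ j, zz j ∈ M := by
    intro j
    by_cases h : j < s
    · simp only [hzz, dif_pos h]; exact hzM ⟨_, rfl⟩
    · simp only [hzz, dif_neg h]; exact hM.choose_spec
  have hww0 : ∀ j, 0 ≤ ww j := by
    intro j
    by_cases h : j < s
    · simp only [hww, dif_pos h]; exact (hw0 _).le
    · simp only [hww, dif_neg h]; exact le_rfl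
  have hsum_w : ∑ j ∈ Finset.range s, ww j = 1 := by
    rw [Finset.sum_range fun j => ww j]
    rw [Finset.sum_congr rfl fun (i : Fin s) _ => show ww ↑i = w (e i) by
      simp only [hww, dif_pos i.isLt, Fin.eta]]
    rw [Equiv.sum_comp e w, hw1]
  have hsum_z : ∑ j ∈ Finset.range s, ww j • zz j = p := by
    rw [Finset.sum_range fun j => ww j • zz j]
    rw [Finset.sum_congr rfl fun (i : Fin s) _ =>
      show ww ↑i • zz ↑i = w (e i) • z (e i) by
        simp only [hww, hzz, dif_pos i.isLt, Fin.eta]]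
    rw [Equiv.sum_comp e (fun i => w i • z i), hwz]
  -- cumulative sums and rounded counts
  set W : ℕ → ℝ := fun i => ∑ j ∈ Finset.range i, ww j with hW
  set N : ℕ → ℕ := fun i => ⌊W i * v⌋₊ with hN
  have hW0 : ∀ i, 0 ≤ W i := fun i => Finset.sum_nonneg fun j _ => hww0 j
  have hWmono : Monotone W := fun i j hij =>
    Finset.sum_le_sum_of_subset_of_nonneg (Finset.range_subset_range.2 hij)
      (fun j _ _ => hww0 j)
  have hNmono : Monotone N := fun i j hij =>
    Nat.floor_mono (mul_le_mul_of_nonneg_right (hWmono hij) hv0.le)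
  have hN0 : N 0 = 0 := by simp [hN, hW]
  have hNs : N s = v := by
    simp only [hN, hW, hsum_w, one_mul]
    exact Nat.floor_natCast v
  have hNle : ∀ i, (N i : ℝ) ≤ W i * v := fun i =>
    Nat.floor_le (mul_nonneg (hW0 i) hv0.le)
  have hNgt : ∀ i, W i * v < (N i : ℝ) + 1 := fun i => Nat.lt_floor_add_one _
  -- the sequence b
  set b : ℕ → EuclideanSpace ℝ (Fin k) :=
    fun j => zz (Nat.findGreatest (fun i => N i ≤ j) s) with hb
  have hbM : ∀ j, b j ∈ M := fun j => hzzM _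
  -- value of b on blocks
  have hbval : ∀ i < s, ∀ j, N i ≤ j → j < N (i + 1) → b j = zz i := by
    intro i hi j hij hji
    have hle : i ≤ Nat.findGreatest (fun i => N i ≤ j) s :=
      Nat.le_findGreatest hi.le hij
    have hge : Nat.findGreatest (fun i => N i ≤ j) s ≤ i := by
      by_contra hc
      push_neg at hc
      have hne : Nat.findGreatest (fun i => N i ≤ j) s ≠ 0 := by omega
      have hP : N (Nat.findGreatest (fun i => N i ≤ j) s) ≤ j :=
        Nat.findGreatest_of_ne_zero (P := fun i => N i ≤ j) rfl hne
      have : N (i + 1) ≤ N (Nat.findGreatest (fun i => N i ≤ j) s) := hNmono (by omega)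
      omega
    have heq : Nat.findGreatest (fun i => N i ≤ j) s = i := le_antisymm hge hle
    simp only [hb, heq]
  -- block sum formula
  have key : ∀ m, m ≤ s → ∑ j ∈ Finset.range (N m), b j
      = ∑ i ∈ Finset.range m, (((N (i+1) - N i : ℕ) : ℝ)) • zz i := by
    intro m
    induction m with
    | zero => intro _; simp [hN0]
    | succ m ih =>
      intro hm
      have h1 : N m ≤ N (m + 1) := hNmono (Nat.le_succ m)
      rw [Finset.range_eq_Ico,
        ← Finset.sum_Ico_consecutive _ (Nat.zero_le (N m)) h1,
        ← Finset.range_eq_Ico, ih (by omega), Finset.sum_range_succ]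
      congr 1
      have : ∀ j ∈ Finset.Ico (N m) (N (m+1)), b j = zz m := fun j hj => by
        rw [Finset.mem_Ico] at hj
        exact hbval m (by omega) j hj.1 hj.2
      rw [Finset.sum_congr rfl this, Finset.sum_const, Nat.card_Ico,
        ← Nat.cast_smul_eq_nsmul ℝ]
  have hbsum : ∑ j ∈ Finset.range v, b j
      = ∑ i ∈ Finset.range s, (((N (i+1) - N i : ℕ) : ℝ)) • zz i := by
    rw [← hNs]; exact key s le_rfl
  -- the error bound on the block sums
  have herr : ‖∑ j ∈ Finset.range v, b j - (v : ℝ) • p‖ ≤ 2 * (k + 1) := by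
    rw [hbsum, ← hsum_z, Finset.smul_sum, ← Finset.sum_sub_distrib]
    have hterm : ∀ i ∈ Finset.range s,
        ‖(((N (i+1) - N i : ℕ) : ℝ)) • zz i - (v:ℝ) • ww i • zz i‖ ≤ 2 := by
      intro i hi
      rw [smul_smul, ← sub_smul, norm_smul]
      have hzn : ‖zz i‖ ≤ 1 := probVec_norm_le_one (hMsub (hzzM i))
      have hcastsub : (((N (i+1) - N i : ℕ) : ℝ)) = (N (i+1) : ℝ) - (N i : ℝ) := by
        have := hNmono (Nat.le_succ i)
        push_cast [Nat.cast_sub this]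
        ring
      have hwwi : ww i = W (i+1) - W i := by
        simp [hW, Finset.sum_range_succ]
      have habs : |(((N (i+1) - N i : ℕ) : ℝ)) - (v:ℝ) * ww i| ≤ 2 := by
        rw [hcastsub, hwwi]
        have h1 := hNle i
        have h2 := hNgt i
        have h3 := hNle (i+1)
        have h4 := hNgt (i+1)
        rw [abs_le]
        constructor <;> nlinarith
      calc |(((N (i+1) - N i : ℕ) : ℝ)) - (v:ℝ) * ww i| * ‖zz i‖
          ≤ 2 * 1 := by
            apply mul_le_mul habs hzn (norm_nonneg _) (by norm_num)
        _ = 2 := by norm_num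
    calc ‖∑ i ∈ Finset.range s,
          ((((N (i+1) - N i : ℕ) : ℝ)) • zz i - (v:ℝ) • ww i • zz i)‖
        ≤ ∑ i ∈ Finset.range s, ‖(((N (i+1) - N i : ℕ) : ℝ)) • zz i - (v:ℝ) • ww i • zz i‖ :=
          norm_sum_le _ _
      _ ≤ ∑ _i ∈ Finset.range s, (2:ℝ) := Finset.sum_le_sum hterm
      _ = 2 * s := by rw [Finset.sum_const, Finset.card_range]; push_cast; ring
      _ ≤ 2 * (k + 1) := by
          have : (s:ℝ) ≤ (k:ℝ) + 1 := by exact_mod_cast hcard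
          linarith
  refine ⟨b, fun j _ => hbM j, ?_, ?_⟩
  · -- final bound
    have hui : ((u:ℝ) + (v:ℝ)) ≠ 0 := by positivity
    rw [avg_decomp _ _ _ _ _ hu0.ne' hui]
    have h1 : ‖((u:ℝ) * ((u:ℝ) + (v:ℝ))⁻¹) • ((u:ℝ)⁻¹ • ∑ j ∈ Finset.range u, a j - p)‖
        < (u:ℝ) * ((u:ℝ) + (v:ℝ))⁻¹ * δ := by
      rw [norm_smul, Real.norm_eq_abs, abs_of_pos (by positivity)]
      exact mul_lt_mul_of_pos_left hqp (by positivity)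
    have h2 : ‖((u:ℝ) + (v:ℝ))⁻¹ • (∑ j ∈ Finset.range v, b j - (v:ℝ) • p)‖
        ≤ ((u:ℝ) + (v:ℝ))⁻¹ * (2 * (k + 1)) := by
      rw [norm_smul, Real.norm_eq_abs, abs_of_pos (by positivity)]
      exact mul_le_mul_of_nonneg_left herr (by positivity)
    refine lt_of_le_of_lt (norm_add_le _ _)
      (lt_of_lt_of_le (add_lt_add_of_lt_of_le h1 h2) ?_)
    · 
          have hvd : 2 * ((k:ℝ) + 1) ≤ (v:ℝ) * δ / 2 := by
            rw [div_le_iff₀ hv0] at hv2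
            nlinarith
          rw [div_le_iff₀ (by positivity)] at hv1
          have huv : (0:ℝ) < (u:ℝ) + (v:ℝ) := by positivity
          rw [← sub_nonneg]
          have expand : δ - ((u:ℝ) * ((u:ℝ) + (v:ℝ))⁻¹ * δ + ((u:ℝ) + (v:ℝ))⁻¹ * (2 * (k + 1)))
              = (((u:ℝ) + (v:ℝ))⁻¹) * ((v:ℝ) * δ - 2 * ((k:ℝ)+1)) := by
            field_simp
            ring
          rw [expand]
          apply mul_nonneg (by positivity)
          nlinarith
  · -- running bound
    intro i hi
    have hi0 : (0:ℝ) ≤ (i:ℝ) := Nat.cast_nonneg i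
    have hui : ((u:ℝ) + (i:ℝ)) ≠ 0 := by positivity
    rw [avg_decomp _ _ _ _ _ hu0.ne' hui]
    have herri : ‖∑ j ∈ Finset.range i, b j - (i : ℝ) • p‖ ≤ 2 * i := by
      have : ∑ j ∈ Finset.range i, b j - (i : ℝ) • p
          = ∑ j ∈ Finset.range i, (b j - p) := by
        rw [Finset.sum_sub_distrib, Finset.sum_const, Finset.card_range,
          ← Nat.cast_smul_eq_nsmul ℝ]
      rw [this]
      calc ‖∑ j ∈ Finset.range i, (b j - p)‖
          ≤ ∑ j ∈ Finset.range i, ‖b j - p‖ := norm_sum_le _ _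
        _ ≤ ∑ _j ∈ Finset.range i, (2:ℝ) := by
            refine Finset.sum_le_sum fun j _ => ?_
            calc ‖b j - p‖ ≤ ‖b j‖ + ‖p‖ := norm_sub_le _ _
              _ ≤ 1 + 1 := add_le_add
                  (probVec_norm_le_one (hMsub (hbM j))) (probVec_norm_le_one hpP)
              _ = 2 := by norm_num
        _ = 2 * i := by rw [Finset.sum_const, Finset.card_range]; push_cast; ring
    have h1 : ‖((u:ℝ) * ((u:ℝ) + (i:ℝ))⁻¹) • ((u:ℝ)⁻¹ • ∑ j ∈ Finset.range u, a j - p)‖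
        < δ := by
      rw [norm_smul, Real.norm_eq_abs, abs_of_pos (by positivity)]
      have hle1 : (u:ℝ) * ((u:ℝ) + (i:ℝ))⁻¹ ≤ 1 := by
        rw [← div_eq_mul_inv, div_le_one (by positivity)]
        linarith
      calc (u:ℝ) * ((u:ℝ) + (i:ℝ))⁻¹ * ‖(u:ℝ)⁻¹ • ∑ j ∈ Finset.range u, a j - p‖
          < (u:ℝ) * ((u:ℝ) + (i:ℝ))⁻¹ * δ := mul_lt_mul_of_pos_left hqp (by positivity)
        _ ≤ 1 * δ := mul_le_mul_of_nonneg_right hle1 hδ.le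
        _ = δ := one_mul δ
    have h2 : ‖((u:ℝ) + (i:ℝ))⁻¹ • (∑ j ∈ Finset.range i, b j - (i:ℝ) • p)‖ ≤ δ := by
      rw [norm_smul, Real.norm_eq_abs, abs_of_pos (by positivity)]
      have hiv : (i:ℝ) ≤ (v:ℝ) := by exact_mod_cast hi
      have step1 : ((u:ℝ) + (i:ℝ))⁻¹ * (2 * (i:ℝ)) ≤ 2 * (v:ℝ) / ((u:ℝ) + (v:ℝ)) := by
        rw [inv_mul_eq_div, div_le_div_iff₀ (by positivity) (by positivity)]
        nlinarith
      calc ((u:ℝ) + (i:ℝ))⁻¹ * ‖∑ j ∈ Finset.range i, b j - (i:ℝ) • p‖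
          ≤ ((u:ℝ) + (i:ℝ))⁻¹ * (2 * i) := mul_le_mul_of_nonneg_left herri (by positivity)
        _ ≤ 2 * (v:ℝ) / ((u:ℝ) + (v:ℝ)) := step1
        _ ≤ δ := hv1
    refine lt_of_le_of_lt (norm_add_le _ _) ?_
    have := add_lt_add_of_lt_of_le h1 h2
    linarith
end
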